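/- For real numbers a < 0, N ≥ 1 a natural number, the iterated integral ∫₀^{s_N} ⋯ ∫₀^{s₂} ∫₀^{s₁} e^{a(−N s₀ + s₁ + s₂ + ⋯ + s_N)} ds₀ ds₁ ⋯ ds_{N−1} equals (e^{a s_N} − 1)^N / (N! a^N). -/

import Mathlib

/-- The iterated integral
`∫₀^{s} ⋯ ∫₀^{s₂} ∫₀^{s₁} e^{a(−N s₀ + s₁ + ⋯ + s_{N-1})} ds₀ ⋯ ds_{N−1}`,
as a function of the outer variable `s`: `iterInt a N k s` performs `k+1` nested
integrals, where the innermost integrand is `e^{−N a s₀}` and each subsequent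
level multiplies by `e^{a s_i}`. -/
noncomputable def iterInt (a : ℝ) (N : ℕ) : ℕ → ℝ → ℝ
  | 0, s => ∫ s0 in (0:ℝ)..s, Real.exp (-(N : ℝ) * a * s0)
  | (k + 1), s => ∫ x in (0:ℝ)..s, Real.exp (a * x) * iterInt a N k x

/-- Explicit closed form for the iterated integral `iterInt a N k`. -/
noncomputable def Fk (a : ℝ) (N k : ℕ) (s : ℝ) : ℝ :=
  (∑ j ∈ Finset.range k,
      ((k.choose (j+1) : ℝ) * (-1)^(k-(j+1)) / (((N-k+j+1 : ℕ) : ℝ) * k.factorial))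
        * (Real.exp (((j:ℝ)+1) * (a * s)) - 1)
    + (-1 : ℝ)^(k+1) * (((N-k-1).factorial : ℝ) / N.factorial)
        * (Real.exp (-((N-k : ℕ) : ℝ) * (a * s)) - 1)) / a ^ (k+1)

/-- The beta-type alternating binomial sum identity. -/
lemma sum_choose_neg_one_div (m : ℕ) : ∀ y : ℕ,
    ∑ j ∈ Finset.range (m+1), (m.choose j : ℝ) * (-1)^j / ((y:ℝ)+1+j)
      = (m.factorial : ℝ) * y.factorial / (y+1+m).factorial := by
  induction m with
  | zero =>
    intro y
    have : ((y+1).factorial : ℝ) = (y+1) * y.factorial := by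
      rw [Nat.factorial_succ]; push_cast; ring
    rw [this]
    simp only [Finset.sum_range_one, Nat.choose_self, Nat.cast_one, pow_zero, Nat.factorial_zero]
    norm_num
    rw [eq_div_iff (by positivity), inv_mul_eq_div, div_eq_iff (by positivity : ((y:ℝ)+1) ≠ 0)]
    ring
  | succ m ih =>
    intro y
    have hfac : ∀ n : ℕ, (0:ℝ) < n.factorial := fun n => by positivity
    have h1 : ∑ j ∈ Finset.range (m+2), ((m+1).choose j : ℝ) * (-1)^j / ((y:ℝ)+1+j)
        = (∑ j ∈ Finset.range (m+1), ((m+1).choose (j+1) : ℝ) * (-1)^(j+1) / ((y:ℝ)+1+(j+1)))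
          + 1 / ((y:ℝ)+1) := by
      rw [Finset.sum_range_succ']
      simp
    rw [h1]
    have h2 : ∀ j ∈ Finset.range (m+1),
        ((m+1).choose (j+1) : ℝ) * (-1)^(j+1) / ((y:ℝ)+1+(j+1))
        = (m.choose j : ℝ) * (-1)^(j+1) / ((y:ℝ)+2+j)
          + (m.choose (j+1) : ℝ) * (-1)^(j+1) / ((y:ℝ)+2+j) := by
      intro j hj
      rw [Nat.choose_succ_succ]
      push_cast
      ring
    rw [Finset.sum_congr rfl h2, Finset.sum_add_distrib]
    have hA : ∑ j ∈ Finset.range (m+1), (m.choose j : ℝ) * (-1)^(j+1) / ((y:ℝ)+2+j)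
        = -((m.factorial : ℝ) * (y+1).factorial / (y+2+m).factorial) := by
      have := ih (y+1)
      push_cast at this
      rw [← this, ← Finset.sum_neg_distrib]
      apply Finset.sum_congr rfl
      intro j hj
      ring_nf
    have hB : ∑ j ∈ Finset.range (m+1), (m.choose (j+1) : ℝ) * (-1)^(j+1) / ((y:ℝ)+2+j)
        = (m.factorial : ℝ) * y.factorial / (y+1+m).factorial - 1/((y:ℝ)+1) := by
      rw [Finset.sum_range_succ, Nat.choose_succ_self]
      have hy := ih y
      rw [Finset.sum_range_succ'] at hy
      push_cast at hy
      have hsum : ∑ x ∈ Finset.range m, (m.choose (x+1):ℝ)*(-1)^(x+1)/((y:ℝ)+2+x)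
          = ∑ x ∈ Finset.range m, (m.choose (x+1):ℝ)*(-1)^(x+1)/((y:ℝ)+1+((x:ℝ)+1)) := by
        apply Finset.sum_congr rfl
        intro x _
        ring_nf
      rw [hsum]
      simp only [Nat.choose_zero_right, Nat.cast_one, pow_zero, one_mul, add_zero, Nat.cast_zero,
        zero_mul, zero_div] at hy ⊢
      linarith [hy]
    rw [hA, hB]
    have e1 : ((y+2+m).factorial : ℝ) = (y+2+m) * (y+1+m).factorial := by
      have : y+2+m = (y+1+m)+1 := by omega
      rw [this, Nat.factorial_succ]; push_cast; ring
    have e2 : ((y+1).factorial : ℝ) = (y+1) * y.factorial := by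
      rw [Nat.factorial_succ]; push_cast; ring
    have e3 : ((y+1+(m+1)).factorial : ℝ) = (y+2+m) * (y+1+m).factorial := by
      have : y+1+(m+1) = (y+1+m)+1 := by omega
      rw [this, Nat.factorial_succ]; push_cast; ring
    have e4 : ((m+1).factorial : ℝ) = (m+1) * m.factorial := by
      rw [Nat.factorial_succ]; push_cast; ring
    rw [e1, e2, e3, e4]
    have h5 : ((y:ℝ)+1+m) ≠ 0 := by positivity
    have h6 : ((y:ℝ)+2+m) ≠ 0 := by positivity
    field_simp
    ring

lemma Fk_zero (a : ℝ) (N k : ℕ) : Fk a N k 0 = 0 := by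
  simp [Fk]

lemma hasDerivAt_exp_mul_lin (c x : ℝ) :
    HasDerivAt (fun t => Real.exp (c * t)) (c * Real.exp (c * x)) x := by
  have h : HasDerivAt (fun t : ℝ => c * t) c x := by
    simpa using (hasDerivAt_id x).const_mul c
  simpa [mul_comm] using h.exp

lemma integral_exp_mul_lin (c : ℝ) (hc : c ≠ 0) (s : ℝ) :
    ∫ x in (0:ℝ)..s, Real.exp (c * x) = (Real.exp (c * s) - 1) / c := by
  have h : ∀ x ∈ Set.uIcc (0:ℝ) s,
      HasDerivAt (fun t => Real.exp (c * t) / c) (Real.exp (c * x)) x := by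
    intro x _
    have := (hasDerivAt_exp_mul_lin c x).div_const c
    simpa [mul_div_assoc, mul_comm, mul_div_cancel_left₀ _ hc] using this
  rw [intervalIntegral.integral_eq_sub_of_hasDerivAt h
      ((Real.continuous_exp.comp (continuous_const.mul continuous_id)).intervalIntegrable 0 s)]
  simp [sub_div]

lemma neg_one_pow_sub_real {i k : ℕ} (h : i ≤ k) :
    ((-1:ℝ))^(k-i) = (-1)^k * (-1)^i := by
  have h1 : ((-1:ℝ))^(k-i) * (-1)^i = (-1)^k := by
    rw [← pow_add, Nat.sub_add_cancel h]
  have h2 : ((-1:ℝ))^i * (-1)^i = 1 := by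
    rw [← mul_pow]; norm_num
  calc ((-1:ℝ))^(k-i) = (-1)^(k-i) * ((-1)^i * (-1)^i) := by rw [h2, mul_one]
    _ = (-1)^k * (-1)^i := by rw [← mul_assoc, h1]

lemma exp_mul_Fk_eq (a : ℝ) (ha : a ≠ 0) (k p : ℕ) (s : ℝ) :
    Real.exp (a*s) * Fk a (k+2+p) k s =
      ((∑ j ∈ Finset.range (k+1),
        (((k+1).choose (j+1) : ℝ) * (-1)^((k+1)-(j+1)) /
          (((p+1+j+1 : ℕ) : ℝ) * (k+1).factorial)) *
            (Real.exp (((j:ℝ)+1) * (a * s)) * (((j:ℝ)+1) * a))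
       + (-1 : ℝ)^(k+1+1) * ((p.factorial : ℝ) / (k+2+p).factorial) *
          (Real.exp (-((p+1 : ℕ) : ℝ) * (a * s)) * (-((p+1 : ℕ) : ℝ) * a))) / a ^ (k+1+1)) := by
  have e2 : k+2+p-k = p+2 := by omega
  have e3 : p+2-1 = p+1 := by omega
  have hfk : ((k.factorial :ℝ)) ≠ 0 := by positivity
  simp only [Fk, e2, e3]
  rw [Finset.sum_range_succ']
  have hg : ∀ j ∈ Finset.range k,
      (((k+1).choose (j+1+1) : ℝ) * (-1)^((k+1)-(j+1+1)) /
          (((p+1+(j+1)+1 : ℕ) : ℝ) * (k+1).factorial)) *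
            (Real.exp (((↑(j+1):ℝ)+1) * (a * s)) * (((↑(j+1):ℝ)+1) * a))
      = a * (Real.exp (a*s) *
          (((k.choose (j+1) : ℝ) * (-1)^(k-(j+1)) / (((p+2+j+1 : ℕ) : ℝ) * k.factorial))
            * (Real.exp (((j:ℝ)+1) * (a * s)) - 1)))
        + (a * ((k.choose (j+1) : ℝ) * (-1)^(k-(j+1)) / (((p+2+j+1 : ℕ) : ℝ) * k.factorial)))
            * Real.exp (a*s) := by
    intro j hj
    have hsub : (k+1)-(j+1+1) = k-(j+1) := by omega
    have hexp : Real.exp (((↑(j+1):ℝ)+1) * (a * s))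
        = Real.exp (((j:ℝ)+1) * (a * s)) * Real.exp (a*s) := by
      rw [← Real.exp_add]; congr 1; push_cast; ring
    have hch : (((k+1).choose (j+2) : ℝ)) * ((j:ℝ)+2) = ((k:ℝ)+1) * (k.choose (j+1)) := by
      have := (Nat.add_one_mul_choose_eq k (j+1)).symm
      exact_mod_cast congrArg (Nat.cast (R := ℝ)) this
    have hfact : ((k+1).factorial : ℝ) = ((k:ℝ)+1) * k.factorial := by
      rw [Nat.factorial_succ]; push_cast; ring
    have hden : (p+1+(j+1)+1 : ℕ) = p+2+j+1 := by omega
    have hdenne : ((p+2+j+1 : ℕ) : ℝ) ≠ 0 := by positivity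
    rw [hsub, hexp, hden, hfact]
    have hkk : ((k:ℝ)+1) ≠ 0 := by positivity
    have hch' : (((k+1).choose (j+1+1) : ℝ)) = ((k:ℝ)+1) * (k.choose (j+1)) / ((j:ℝ)+2) := by
      rw [eq_div_iff (by positivity)]; linarith [hch]
    rw [hch']
    push_cast
    field_simp
    ring
  rw [Finset.sum_congr rfl hg, Finset.sum_add_distrib, ← Finset.mul_sum, ← Finset.mul_sum,
    ← Finset.sum_mul, ← Finset.mul_sum]
  have hB : ∑ j ∈ Finset.range k,
      (k.choose (j+1) : ℝ) * (-1)^(k-(j+1)) / (((p+2+j+1 : ℕ) : ℝ) * k.factorial)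
      = (-1:ℝ)^k * (((p+1).factorial : ℝ) / (k+2+p).factorial)
        - (-1:ℝ)^k / (((p:ℝ)+2) * k.factorial) := by
    have hS := sum_choose_neg_one_div k (p+1)
    rw [Finset.sum_range_succ'] at hS
    simp only [Nat.choose_zero_right, Nat.cast_one, pow_zero, Nat.cast_zero] at hS
    have h1 : ∀ j ∈ Finset.range k,
        (k.choose (j+1) : ℝ) * (-1)^(k-(j+1)) / (((p+2+j+1 : ℕ) : ℝ) * k.factorial)
        = ((-1:ℝ)^k / (k.factorial : ℝ)) *
            ((k.choose (j+1) : ℝ) * (-1)^(j+1) / (((p+1:ℕ):ℝ)+1+(↑(j+1):ℝ))) := by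
      intro j hj
      rw [neg_one_pow_sub_real (by simp at hj; omega : j+1 ≤ k)]
      push_cast
      field_simp
      ring
    rw [Finset.sum_congr rfl h1, ← Finset.mul_sum]
    have h2 : ∑ j ∈ Finset.range k,
        (k.choose (j+1) : ℝ) * (-1)^(j+1) / (((p+1:ℕ):ℝ)+1+(↑(j+1):ℝ))
        = (k.factorial : ℝ) * (p+1).factorial / ((p+1)+1+k).factorial - 1/((p:ℝ)+2) := by
      push_cast at hS ⊢
      have hq : (1:ℝ) * 1 / ((p:ℝ)+1+1+0) = 1/((p:ℝ)+2) := by ring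
      rw [hq] at hS
      linarith [hS]
    rw [h2]
    have : ((p+1)+1+k : ℕ) = k+2+p := by omega
    rw [this]
    field_simp
  rw [hB]
  have hEV : Real.exp (a*s) * Real.exp (-((p+2 : ℕ) : ℝ) * (a * s))
      = Real.exp (-((p+1 : ℕ) : ℝ) * (a * s)) := by
    rw [← Real.exp_add]; congr 1; push_cast; ring
  have hfacts : ((k+1).factorial : ℝ) = ((k:ℝ)+1) * k.factorial := by
    rw [Nat.factorial_succ]; push_cast; ring
  have hfactp : (((p+1)).factorial : ℝ) = ((p:ℝ)+1) * p.factorial := by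
    rw [Nat.factorial_succ]; push_cast; ring
  rw [← hEV]
  rw [show p+1+0+1 = p+2 from by omega, show k+1-(0+1) = k from by omega,
    Nat.choose_one_right, hfacts, hfactp]
  simp only [Nat.cast_zero, zero_add, one_mul]
  have hkk : ((k:ℝ)+1) ≠ 0 := by positivity
  have hpp : ((p:ℝ)+2) ≠ 0 := by positivity
  have hNf : (((k+2+p).factorial : ℝ)) ≠ 0 := by positivity
  push_cast
  field_simp
  ring

lemma hasDerivAt_Fk (a : ℝ) (ha : a ≠ 0) (k p : ℕ) (s : ℝ) :
    HasDerivAt (Fk a (k+2+p) (k+1)) (Real.exp (a*s) * Fk a (k+2+p) k s) s := by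
  have e1 : k+2+p-(k+1) = p+1 := by omega
  have hterm : ∀ j ∈ Finset.range (k+1),
      HasDerivAt (fun x => (((k+1).choose (j+1) : ℝ) * (-1)^((k+1)-(j+1)) /
          (((p+1+j+1 : ℕ) : ℝ) * (k+1).factorial)) * (Real.exp (((j:ℝ)+1) * (a * x)) - 1))
        ((((k+1).choose (j+1) : ℝ) * (-1)^((k+1)-(j+1)) /
          (((p+1+j+1 : ℕ) : ℝ) * (k+1).factorial)) *
            (Real.exp (((j:ℝ)+1) * (a * s)) * (((j:ℝ)+1) * a))) s := by
    intro j _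
    have h1 : HasDerivAt (fun x : ℝ => ((j:ℝ)+1) * (a * x)) (((j:ℝ)+1) * a) s := by
      simpa [mul_assoc] using ((hasDerivAt_id s).const_mul a).const_mul ((j:ℝ)+1)
    exact ((h1.exp).sub_const 1).const_mul _
  have htail : HasDerivAt (fun x =>
        (-1 : ℝ)^(k+1+1) * ((p.factorial : ℝ) / (k+2+p).factorial) *
          (Real.exp (-((p+1 : ℕ) : ℝ) * (a * x)) - 1))
      ((-1 : ℝ)^(k+1+1) * ((p.factorial : ℝ) / (k+2+p).factorial) *
          (Real.exp (-((p+1 : ℕ) : ℝ) * (a * s)) * (-((p+1 : ℕ) : ℝ) * a))) s := by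
    have h1 : HasDerivAt (fun x : ℝ => -((p+1 : ℕ) : ℝ) * (a * x)) (-((p+1 : ℕ) : ℝ) * a) s := by
      simpa [mul_assoc] using ((hasDerivAt_id s).const_mul a).const_mul (-((p+1 : ℕ) : ℝ))
    exact ((h1.exp).sub_const 1).const_mul _
  have hF := ((HasDerivAt.sum hterm).add htail).div_const (a^(k+1+1))
  have hfun : Fk a (k+2+p) (k+1) = fun x =>
      (∑ j ∈ Finset.range (k+1),
        (((k+1).choose (j+1) : ℝ) * (-1)^((k+1)-(j+1)) /
          (((p+1+j+1 : ℕ) : ℝ) * (k+1).factorial)) * (Real.exp (((j:ℝ)+1) * (a * x)) - 1)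
       + (-1 : ℝ)^(k+1+1) * ((p.factorial : ℝ) / (k+2+p).factorial) *
          (Real.exp (-((p+1 : ℕ) : ℝ) * (a * x)) - 1)) / a ^ (k+1+1) := by
    funext x
    simp only [Fk, e1, Nat.add_sub_cancel]
  rw [hfun, exp_mul_Fk_eq a ha k p s]
  simpa only [Pi.add_apply, Finset.sum_apply] using hF

lemma continuous_Fk (a : ℝ) (N k : ℕ) : Continuous (Fk a N k) := by
  unfold Fk
  fun_prop

lemma iterInt_eq_Fk (a : ℝ) (ha : a ≠ 0) (N : ℕ) (hN : 1 ≤ N) :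
    ∀ k, k + 1 ≤ N → ∀ s, iterInt a N k s = Fk a N k s := by
  intro k
  induction k with
  | zero =>
    intro _ s
    obtain ⟨q, rfl⟩ : ∃ q, N = q+1 := ⟨N-1, by omega⟩
    have hc : (-((q:ℝ)+1)) * a ≠ 0 := by
      apply mul_ne_zero _ ha
      have : (0:ℝ) < (q:ℝ)+1 := by positivity
      linarith
    show (∫ s0 in (0:ℝ)..s, Real.exp (-((q+1 : ℕ) : ℝ) * a * s0)) = _
    have harg : ∀ s0 : ℝ, -((q+1 : ℕ) : ℝ) * a * s0 = (-((q:ℝ)+1)) * a * s0 := by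
      intro s0; push_cast; ring
    simp only [harg]
    rw [integral_exp_mul_lin ((-((q:ℝ)+1)) * a) hc s]
    simp only [Fk, Finset.range_zero, Finset.sum_empty, Nat.sub_zero, zero_add, pow_one,
      Nat.add_sub_cancel]
    have hfq : ((q+1).factorial : ℝ) = ((q:ℝ)+1) * q.factorial := by
      rw [Nat.factorial_succ]; push_cast; ring
    rw [hfq]
    have hqq : ((q:ℝ)+1) ≠ 0 := by positivity
    have hfqq : ((q.factorial : ℝ)) ≠ 0 := by positivity
    have hargexp : (-((q:ℝ)+1)) * a * s = -((q+1 : ℕ) : ℝ) * (a * s) := by push_cast; ring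
    rw [hargexp, div_eq_div_iff hc ha]
    field_simp
  | succ k ih =>
    intro hk s
    show (∫ x in (0:ℝ)..s, Real.exp (a * x) * iterInt a N k x) = _
    rw [intervalIntegral.integral_congr
      (g := fun x => Real.exp (a * x) * Fk a N k x) (fun x _ => by rw [ih (by omega) x])]
    obtain ⟨p, rfl⟩ : ∃ p, N = k+2+p := ⟨N-(k+2), by omega⟩
    have hcont : Continuous (fun x => Real.exp (a * x) * Fk a (k+2+p) k x) :=
      (Real.continuous_exp.comp (continuous_const.mul continuous_id)).mul
        (continuous_Fk a (k+2+p) k)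
    rw [intervalIntegral.integral_eq_sub_of_hasDerivAt
      (fun x _ => hasDerivAt_Fk a ha k p x) (hcont.intervalIntegrable 0 s)]
    rw [Fk_zero, sub_zero]

/-- For `a < 0` and `N ≥ 1`, the iterated simplex integral
`∫₀^{s_N} ⋯ ∫₀^{s₂} ∫₀^{s₁} e^{a(−N s₀ + s₁ + s₂ + ⋯ + s_N)} ds₀ ds₁ ⋯ ds_{N−1}`
(the factor `e^{a s_N}` of the integrand is constant in the integration variables)
equals `(e^{a s_N} − 1)^N / (N! a^N)`. -/
theorem iterated_simplex_integral_exp (a : ℝ) (N : ℕ) (sN : ℝ)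
    (ha : a < 0) (hN : 1 ≤ N) (hs : 0 ≤ sN) :
    Real.exp (a * sN) * iterInt a N (N - 1) sN =
      (Real.exp (a * sN) - 1) ^ N / ((N.factorial : ℝ) * a ^ N) := by
  have ha' : a ≠ 0 := ne_of_lt ha
  obtain ⟨q, rfl⟩ : ∃ q, N = q+1 := ⟨N-1, by omega⟩
  rw [show q+1-1 = q from by omega]
  rw [iterInt_eq_Fk a ha' (q+1) hN q (by omega) sN]
  have hfq : ((q+1).factorial : ℝ) = ((q:ℝ)+1) * q.factorial := by
    rw [Nat.factorial_succ]; push_cast; ring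
  have hfqq : ((q.factorial : ℝ)) ≠ 0 := by positivity
  have hfq1 : (((q+1).factorial : ℝ)) ≠ 0 := by positivity
  simp only [Fk, show q+1-q = 1 from by omega, show (1-1 : ℕ) = 0 from rfl,
    Nat.factorial_zero, Nat.cast_one]
  rw [sub_pow]
  simp only [one_pow, mul_one]
  rw [Finset.sum_range_succ', Finset.sum_range_succ']
  set E := Real.exp (a * sN) with hE
  have hg : ∀ j ∈ Finset.range q,
      (-1:ℝ)^((j+1+1)+(q+1)) * E^(j+1+1) * ((q+1).choose (j+1+1) : ℝ)
      = ((q+1).factorial : ℝ) * (E *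
          (((q.choose (j+1) : ℝ) * (-1)^(q-(j+1)) / (((1+j+1 : ℕ) : ℝ) * q.factorial))
            * (Real.exp (((j:ℝ)+1) * (a * sN)) - 1)))
        + (((q+1).factorial : ℝ) *
            ((q.choose (j+1) : ℝ) * (-1)^(q-(j+1)) / (((1+j+1 : ℕ) : ℝ) * q.factorial))) * E := by
    intro j hj
    have hjq : j + 1 ≤ q := by simp at hj; omega
    have hEX : E^(j+1+1) = Real.exp (((j:ℝ)+1) * (a * sN)) * E := by
      rw [hE, ← Real.exp_add, ← Real.exp_nat_mul]
      congr 1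
      push_cast
      ring
    have hj2 : ((j:ℝ)+2) ≠ 0 := by positivity
    have hch : (((q+1).choose (j+2) : ℝ)) * ((j:ℝ)+2) = ((q:ℝ)+1) * (q.choose (j+1)) := by
      have := (Nat.add_one_mul_choose_eq q (j+1)).symm
      exact_mod_cast congrArg (Nat.cast (R := ℝ)) this
    have hch' : (((q+1).choose (j+2) : ℝ)) = ((q:ℝ)+1) * (q.choose (j+1)) / ((j:ℝ)+2) := by
      rw [eq_div_iff hj2]; linarith [hch]
    rw [hEX, neg_one_pow_sub_real hjq, hfq, show j+1+1 = j+2 from by omega, hch']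
    have h12 : ((1+j+1 : ℕ) : ℝ) = (j:ℝ)+2 := by push_cast; ring
    rw [h12]
    field_simp
    ring
  rw [Finset.sum_congr rfl hg, Finset.sum_add_distrib, ← Finset.mul_sum, ← Finset.mul_sum,
    ← Finset.sum_mul, ← Finset.mul_sum]
  have halt : ∑ j ∈ Finset.range q,
      (q.choose (j+1) : ℝ) * (-1)^(q-(j+1)) / (((1+j+1 : ℕ) : ℝ) * q.factorial)
      = (-1:ℝ)^(q+1) * q / (q+1).factorial := by
    have h1 : ∀ j ∈ Finset.range q,
        (q.choose (j+1) : ℝ) * (-1)^(q-(j+1)) / (((1+j+1 : ℕ) : ℝ) * q.factorial)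
        = ((-1:ℝ)^(q+1) / ((q+1).factorial : ℝ)) *
            ((-1:ℝ)^j * ((q+1).choose (j+2) : ℝ)) := by
      intro j hj
      have hjq : j + 1 ≤ q := by simp at hj; omega
      have hj2 : ((j:ℝ)+2) ≠ 0 := by positivity
      have hch : (((q+1).choose (j+2) : ℝ)) * ((j:ℝ)+2) = ((q:ℝ)+1) * (q.choose (j+1)) := by
        have := (Nat.add_one_mul_choose_eq q (j+1)).symm
        exact_mod_cast congrArg (Nat.cast (R := ℝ)) this
      have hch' : (((q+1).choose (j+2) : ℝ)) = ((q:ℝ)+1) * (q.choose (j+1)) / ((j:ℝ)+2) := by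
        rw [eq_div_iff hj2]; linarith [hch]
      rw [neg_one_pow_sub_real hjq, hfq, hch']
      have h12 : ((1+j+1 : ℕ) : ℝ) = (j:ℝ)+2 := by push_cast; ring
      rw [h12]
      field_simp
      ring
    rw [Finset.sum_congr rfl h1, ← Finset.mul_sum]
    have h2 : ∑ j ∈ Finset.range q, (-1:ℝ)^j * ((q+1).choose (j+2) : ℝ) = q := by
      have h0 : (∑ m ∈ Finset.range (q+2), ((-1:ℝ)^m * ((q+1).choose m : ℝ))) = 0 := by
        have := Int.alternating_sum_range_choose (n := q+1)
        rw [if_neg (by omega)] at this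
        exact_mod_cast congrArg (Int.cast (R := ℝ)) this
      rw [Finset.sum_range_succ', Finset.sum_range_succ'] at h0
      simp only [Nat.choose_zero_right, Nat.choose_one_right, pow_zero, Nat.cast_one,
        pow_one, one_mul, Nat.cast_add, Nat.cast_ofNat] at h0
      have h3 : ∀ j ∈ Finset.range q,
          (-1:ℝ)^(j+1+1) * ((q+1).choose (j+1+1) : ℝ)
          = (-1:ℝ)^j * ((q+1).choose (j+2) : ℝ) := by
        intro j _
        have : (-1:ℝ)^(j+1+1) = (-1:ℝ)^j := by
          rw [pow_succ, pow_succ]; ring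
        rw [this]
      rw [Finset.sum_congr rfl h3] at h0
      push_cast [Nat.choose_one_right] at h0 ⊢
      linarith [h0]
    rw [h2]
    ring
  rw [halt]
  have hEV : E * Real.exp (-((1:ℕ) : ℝ) * (a * sN)) = 1 := by
    rw [hE, ← Real.exp_add]
    norm_num
  have hane : (a:ℝ)^(q+1) ≠ 0 := pow_ne_zero _ ha'
  rw [eq_div_iff (by exact mul_ne_zero hfq1 hane)]
  have hV : Real.exp (-1 * (a * sN)) = 1 / E := by
    rw [eq_div_iff (Real.exp_ne_zero _), ← Real.exp_add]
    norm_num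
  rw [hV]
  have hEne : E ≠ 0 := Real.exp_ne_zero _
  simp only [Nat.choose_one_right, Nat.choose_zero_right, pow_zero, Nat.cast_one, mul_one, pow_one]
  generalize (∑ x ∈ Finset.range q, (q.choose (x + 1) : ℝ) * (-1) ^ (q - (x + 1)) /
    (((1 + x + 1 : ℕ) : ℝ) * q.factorial) * (Real.exp (((x:ℝ) + 1) * (a * sN)) - 1)) = T
  field_simp
  simp only [zero_add, Nat.choose_one_right]
  push_cast
  ring
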